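/- Every complex square matrix M with M² = 0 is unitarily similar to a symmetric complex matrix: there exists a unitary matrix U of the same size such that (U M U*)ᵀ = U M U*. -/

import Mathlib

open Matrix

lemma aux_sym {n : ℕ} (N : Matrix (Fin n) (Fin n) ℂ) (d : Fin n → ℝ)
    (hNN : N * N = 0)
    (hND : N + Nᴴ = Matrix.diagonal (fun i => (d i : ℂ))) :
    ∃ Z ∈ Matrix.unitaryGroup (Fin n) ℂ,
      (Z * N * star Z)ᵀ = Z * N * star Z := by
  classical
  set D : Matrix (Fin n) (Fin n) ℂ := Matrix.diagonal (fun i => (d i : ℂ)) with hDdef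
  set B : Matrix (Fin n) (Fin n) ℂ := N - Nᴴ with hBdef
  have hNH : Nᴴ = D - N := eq_sub_of_add_eq' hND
  have hNHN : (D - N) * (D - N) = 0 := by
    rw [← hNH]
    calc Nᴴ * Nᴴ = (N * N)ᴴ := (Matrix.conjTranspose_mul N N).symm
    _ = 0 := by rw [hNN]; simp
  have hBform : B = 2 • N - D := by rw [hBdef, hNH]; abel
  have hBB : B * B = -(D * D) := by
    have key : (2 • N - D) * (2 • N - D) + D * D
        = 2 • ((D - N) * (D - N)) + 2 • (N * N) := by noncomm_ring
    rw [hNHN, hNN] at key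
    simp only [smul_zero, add_zero] at key
    rw [hBform]
    exact eq_neg_of_add_eq_zero_left key
  have hBH : Bᴴ = -B := by
    rw [hBdef]; simp [Matrix.conjTranspose_sub]
  have hanti : D * B + B * D = 0 := by
    have key : D * (2 • N - D) + (2 • N - D) * D
        = 2 • (N * N) - 2 • ((D - N) * (D - N)) := by noncomm_ring
    rw [hNHN, hNN] at key
    simp only [smul_zero, sub_zero] at key
    rw [hBform, key]
  have hBsupp : ∀ i j, d i + d j ≠ 0 → B i j = 0 := by
    intro i j hij
    have h := congrFun (congrFun hanti i) j
    simp only [hDdef, Matrix.add_apply, Matrix.diagonal_mul, Matrix.mul_diagonal,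
      Matrix.zero_apply] at h
    have h2 : ((d i : ℂ) + (d j : ℂ)) * B i j = 0 := by ring_nf; ring_nf at h; linear_combination h
    have h3 : ((d i : ℂ) + (d j : ℂ)) ≠ 0 := by
      exact_mod_cast hij
    exact (mul_eq_zero.mp h2).resolve_left h3
  have hBBH : B * Bᴴ = Matrix.diagonal (fun i => ((d i : ℂ))^2) := by
    rw [hBH, Matrix.mul_neg, hBB, neg_neg, hDdef, Matrix.diagonal_mul_diagonal]
    congr 1; funext i; ring
  have hBBHapp : ∀ p q, (∑ k, B p k * (starRingEnd ℂ) (B q k)) = if p = q then ((d p : ℂ))^2 else 0 := by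
    intro p q
    have h := congrFun (congrFun hBBH p) q
    rw [Matrix.mul_apply] at h
    simp only [Matrix.conjTranspose_apply, Matrix.diagonal_apply] at h
    simpa using h
  have hBsq : ∀ p q, (∑ k, B p k * B k q) = if p = q then -((d p : ℂ))^2 else 0 := by
    intro p q
    have h := congrFun (congrFun hBB p) q
    rw [Matrix.mul_apply] at h
    simp only [hDdef, Matrix.neg_apply, Matrix.diagonal_mul_diagonal, Matrix.diagonal_apply] at h
    rw [h]
    split <;> simp <;> ring
  have hker : ∀ i, d i = 0 → ∀ j, B i j = 0 := by
    intro i h0 j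
    have h := hBBHapp i i
    rw [if_pos rfl, h0] at h
    norm_num at h
    have h2 : (∑ k, (Complex.normSq (B i k) : ℝ)) = 0 := by
      have h5 : (∑ k, ((Complex.normSq (B i k) : ℝ) : ℂ)) = 0 := by
        rw [← h]; congr 1; funext k; rw [Complex.mul_conj]
      exact_mod_cast h5
    have h3 := (Finset.sum_eq_zero_iff_of_nonneg (fun k _ => Complex.normSq_nonneg (B i k))).mp h2
    have h4 := h3 j (Finset.mem_univ j)
    exact Complex.normSq_eq_zero.mp h4
  -- cardinality of opposite eigenvalue fibers
  have hcard : ∀ t : ℝ, 0 < t →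
      Fintype.card {i : Fin n // d i = -t} = Fintype.card {i : Fin n // d i = t} := by
    intro t ht
    set X : Matrix {i : Fin n // d i = t} {i : Fin n // d i = -t} ℂ :=
      Matrix.of (fun k l => B k.1 l.1) with hXdef
    set Y : Matrix {i : Fin n // d i = -t} {i : Fin n // d i = t} ℂ :=
      ((t : ℂ) ^ 2)⁻¹ • Xᴴ with hYdef
    have ht2 : ((t : ℂ) ^ 2) ≠ 0 := pow_ne_zero _ (by exact_mod_cast ht.ne')
    have hsub : ∀ (p : Fin n → Prop) [DecidablePred p] (f : Fin n → ℂ),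
        (∀ x, f x ≠ 0 → p x) → (∑ l : Subtype p, f l.1) = ∑ l : Fin n, f l := by
      intro p _ f hf
      rw [← Finset.sum_subtype (Finset.univ.filter p) (fun x => by simp) f]
      exact Finset.sum_filter_of_ne (fun x _ h => hf x h)
    have hXY : X * Y = 1 := by
      ext k k'
      rw [hYdef, Matrix.mul_smul, Matrix.smul_apply, Matrix.mul_apply]
      have e1 : (∑ l : {i : Fin n // d i = -t}, X k l * Xᴴ l k')
          = ∑ l : Fin n, B k.1 l * (starRingEnd ℂ) (B k'.1 l) := by
        have e0 : ∀ l : {i : Fin n // d i = -t},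
            X k l * Xᴴ l k' = B k.1 l.1 * (starRingEnd ℂ) (B k'.1 l.1) := by
          intro l
          simp [hXdef, Matrix.conjTranspose_apply]
        rw [Finset.sum_congr rfl (fun l _ => e0 l)]
        exact hsub (fun i => d i = -t) (fun l => B k.1 l * (starRingEnd ℂ) (B k'.1 l))
          (fun x hx => by
            by_contra hdx
            have hz : B k.1 x = 0 := hBsupp _ _ (by rw [k.2]; intro hc; exact hdx (by linarith))
            simp [hz] at hx)
      rw [e1, hBBHapp]
      by_cases hkk : k = k'
      · rw [if_pos (congrArg Subtype.val hkk), hkk, Matrix.one_apply_eq, k'.2]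
        rw [smul_eq_mul]
        field_simp
        exact div_self (by exact_mod_cast ht.ne')
      · rw [if_neg (fun hc => hkk (Subtype.ext hc)), Matrix.one_apply_ne hkk]
        simp
    have hYX : Y * X = 1 := by
      ext l l'
      rw [hYdef, Matrix.smul_mul, Matrix.smul_apply, Matrix.mul_apply]
      have e1 : (∑ k : {i : Fin n // d i = t}, Xᴴ l k * X k l')
          = ∑ k : Fin n, B l.1 k * (starRingEnd ℂ) (B l'.1 k) := by
        have e0 : ∀ k : {i : Fin n // d i = t},
            Xᴴ l k * X k l' = B l.1 k.1 * (starRingEnd ℂ) (B l'.1 k.1) := by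
          intro k
          have c1 : B k.1 l.1 = -(starRingEnd ℂ) (B l.1 k.1) := by
            have h5 := congrFun (congrFun hBH k.1) l.1
            simp only [Matrix.conjTranspose_apply, Matrix.neg_apply, Complex.star_def] at h5
            rw [h5, neg_neg]
          have c2 : B k.1 l'.1 = -(starRingEnd ℂ) (B l'.1 k.1) := by
            have h5 := congrFun (congrFun hBH k.1) l'.1
            simp only [Matrix.conjTranspose_apply, Matrix.neg_apply, Complex.star_def] at h5
            rw [h5, neg_neg]
          simp only [hXdef, Matrix.conjTranspose_apply, Matrix.of_apply, c1, c2,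
            Complex.star_def, map_neg, Complex.conj_conj]
          ring
        rw [Finset.sum_congr rfl (fun k _ => e0 k)]
        exact hsub (fun i => d i = t) (fun k => B l.1 k * (starRingEnd ℂ) (B l'.1 k))
          (fun x hx => by
            by_contra hdx
            have hz : B l.1 x = 0 := hBsupp _ _ (by rw [l.2]; intro hc; exact hdx (by linarith))
            simp [hz] at hx)
      rw [e1, hBBHapp]
      by_cases hll : l = l'
      · rw [if_pos (congrArg Subtype.val hll), hll, Matrix.one_apply_eq, l'.2]
        rw [smul_eq_mul]
        push_cast
        field_simp
        exact div_self (by exact_mod_cast ht.ne')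
      · rw [if_neg (fun hc => hll (Subtype.ext hc)), Matrix.one_apply_ne hll]
        simp
    have e : ({i : Fin n // d i = -t} → ℂ) ≃ₗ[ℂ] ({i : Fin n // d i = t} → ℂ) :=
      LinearEquiv.ofLinear (Matrix.toLin' X) (Matrix.toLin' Y)
      (by rw [← Matrix.toLin'_mul, hXY, Matrix.toLin'_one])
      (by rw [← Matrix.toLin'_mul, hYX, Matrix.toLin'_one])
    calc Fintype.card {i : Fin n // d i = -t}
        = Module.finrank ℂ ({i : Fin n // d i = -t} → ℂ) :=
          (Module.finrank_fintype_fun_eq_card ℂ).symm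
      _ = Module.finrank ℂ ({i : Fin n // d i = t} → ℂ) := e.finrank_eq
      _ = Fintype.card {i : Fin n // d i = t} := Module.finrank_fintype_fun_eq_card ℂ
  -- the pairing bijection between negative and positive eigenvalue indices
  have efib : ∀ c : ℝ, {a : {i : Fin n // d i < 0} // -d a.1 = c}
      ≃ {b : {i : Fin n // 0 < d i} // d b.1 = c} := by
    intro c
    by_cases hc : c ≤ 0
    · have h1 : IsEmpty {a : {i : Fin n // d i < 0} // -d a.1 = c} := by
        refine ⟨fun a => ?_⟩
        have := a.1.2
        have := a.2
        linarith
      have h2 : IsEmpty {b : {i : Fin n // 0 < d i} // d b.1 = c} := by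
        refine ⟨fun b => ?_⟩
        have := b.1.2
        have := b.2
        linarith
      exact Equiv.equivOfIsEmpty _ _
    · push_neg at hc
      have e1 : {a : {i : Fin n // d i < 0} // -d a.1 = c} ≃ {i : Fin n // -d i = c} :=
        Equiv.subtypeSubtypeEquivSubtype (p := fun i => d i < 0) (q := fun i => -d i = c)
          (fun {x} hx => by linarith)
      have e2 : {i : Fin n // -d i = c} ≃ {i : Fin n // d i = -c} :=
        Equiv.subtypeEquivRight (fun x => by constructor <;> intro h <;> linarith)
      have e3 : {b : {i : Fin n // 0 < d i} // d b.1 = c} ≃ {i : Fin n // d i = c} :=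
        Equiv.subtypeSubtypeEquivSubtype (p := fun i => 0 < d i) (q := fun i => d i = c)
          (fun {x} hx => by linarith)
      exact e1.trans (e2.trans ((Fintype.equivOfCardEq (hcard c hc)).trans e3.symm))
  set σ : {i : Fin n // d i < 0} ≃ {i : Fin n // 0 < d i} := Equiv.ofFiberEquiv efib with hσdef
  have hσ : ∀ a : {i : Fin n // d i < 0}, d (σ a).1 = -d a.1 :=
    fun a => Equiv.ofFiberEquiv_map efib a
  set s : ∀ i : Fin n, d i < 0 → Fin n := fun i h => (σ ⟨i, h⟩).1 with hsdef
  have hs : ∀ i (h : d i < 0), d (s i h) = -d i := fun i h => hσ ⟨i, h⟩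
  have hsinj : ∀ i (hi : d i < 0) j (hj : d j < 0), s i hi = s j hj → i = j := by
    intro i hi j hj h
    have : (⟨i, hi⟩ : {i : Fin n // d i < 0}) = ⟨j, hj⟩ :=
      σ.injective (Subtype.ext h)
    exact congrArg Subtype.val this
  -- the unitary Z
  set Z : Matrix (Fin n) (Fin n) ℂ := Matrix.of (fun i j =>
    if h : d i < 0 then ((-(d i) : ℝ) : ℂ)⁻¹ * Complex.I * B (s i h) j
    else (if i = j then 1 else 0)) with hZdef
  have hZneg : ∀ i (h : d i < 0) j,
      Z i j = ((-(d i) : ℝ) : ℂ)⁻¹ * Complex.I * B (s i h) j := by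
    intro i h j
    simp only [hZdef, Matrix.of_apply, dif_pos h]
  have hZpos : ∀ i, ¬ (d i < 0) → ∀ j, Z i j = if i = j then 1 else 0 := by
    intro i h j
    simp only [hZdef, Matrix.of_apply, dif_neg h]
  have hdne : ∀ i, d i < 0 → ((-(d i) : ℝ) : ℂ) ≠ 0 := by
    intro i h
    simp only [ne_eq, Complex.ofReal_eq_zero]
    linarith
  -- unitarity
  have hZZH : Z * Zᴴ = 1 := by
    ext i j
    rw [Matrix.mul_apply]
    by_cases hi : d i < 0 <;> by_cases hj : d j < 0
    · have e0 : ∀ k, Z i k * Zᴴ k j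
          = (((-(d i) : ℝ) : ℂ)⁻¹ * ((-(d j) : ℝ) : ℂ)⁻¹)
            * (B (s i hi) k * (starRingEnd ℂ) (B (s j hj) k)) := by
        intro k
        rw [Matrix.conjTranspose_apply, hZneg i hi k, hZneg j hj k]
        simp only [Complex.star_def, _root_.map_mul, map_inv₀, Complex.conj_ofReal,
          Complex.conj_I]
        linear_combination (-(((-(d i) : ℝ) : ℂ)⁻¹ * ((-(d j) : ℝ) : ℂ)⁻¹ *
          B (s i hi) k * (starRingEnd ℂ) (B (s j hj) k))) * Complex.I_sq
      rw [Finset.sum_congr rfl (fun k _ => e0 k), ← Finset.mul_sum, hBBHapp]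
      by_cases hij : i = j
      · subst hij
        rw [if_pos rfl, Matrix.one_apply_eq, hs i hi]
        have h0 : ((d i : ℝ) : ℂ) ≠ 0 := by
          simp only [ne_eq, Complex.ofReal_eq_zero]
          linarith
        push_cast
        field_simp
      · rw [if_neg (fun hc => hij (hsinj i hi j hj hc)), Matrix.one_apply_ne hij, mul_zero]
    · have e0 : ∀ k, Z i k * Zᴴ k j
          = (((-(d i) : ℝ) : ℂ)⁻¹ * Complex.I * B (s i hi) k) * (if j = k then 1 else 0) := by
        intro k
        rw [Matrix.conjTranspose_apply, hZneg i hi k, hZpos j hj k]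
        simp only [Complex.star_def, apply_ite (starRingEnd ℂ), _root_.map_one, _root_.map_zero]
      rw [Finset.sum_congr rfl (fun k _ => e0 k)]
      have hz : B (s i hi) j = 0 := by
        apply hBsupp
        rw [hs i hi]
        push_neg at hj
        intro hc
        have hdj : d j = d i := by linarith
        rw [hdj] at hj
        linarith
      have hij : i ≠ j := fun hc => by rw [hc] at hi; exact hj hi
      rw [Matrix.one_apply_ne hij]
      rw [Finset.sum_eq_single j]
      · rw [if_pos rfl, hz, mul_one, mul_zero]
      · intro k _ hk
        rw [if_neg (fun hc => hk hc.symm), mul_zero]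
      · intro h; exact absurd (Finset.mem_univ j) h
    · have e0 : ∀ k, Z i k * Zᴴ k j
          = (if i = k then 1 else 0) *
            (((-(d j) : ℝ) : ℂ)⁻¹ * (-Complex.I) * (starRingEnd ℂ) (B (s j hj) k)) := by
        intro k
        rw [Matrix.conjTranspose_apply, hZneg j hj k, hZpos i hi k]
        simp only [Complex.star_def, _root_.map_mul, map_inv₀, Complex.conj_ofReal,
          Complex.conj_I, apply_ite (starRingEnd ℂ), _root_.map_one, _root_.map_zero]
      rw [Finset.sum_congr rfl (fun k _ => e0 k)]
      have hz : B (s j hj) i = 0 := by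
        apply hBsupp
        rw [hs j hj]
        push_neg at hi
        intro hc
        have hdi : d i = d j := by linarith
        rw [hdi] at hi
        linarith
      have hij : i ≠ j := fun hc => by rw [← hc] at hj; exact hi hj
      rw [Matrix.one_apply_ne hij]
      rw [Finset.sum_eq_single i]
      · rw [if_pos rfl, hz, map_zero, mul_zero, one_mul]
      · intro k _ hk
        rw [if_neg (fun hc => hk hc.symm), zero_mul]
      · intro h; exact absurd (Finset.mem_univ i) h
    · have e0 : ∀ k, Z i k * Zᴴ k j
          = (if i = k then 1 else 0) * (if j = k then 1 else 0) := by
        intro k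
        rw [Matrix.conjTranspose_apply, hZpos i hi k, hZpos j hj k]
        simp only [Complex.star_def, apply_ite (starRingEnd ℂ), _root_.map_one, _root_.map_zero]
      rw [Finset.sum_congr rfl (fun k _ => e0 k), Matrix.one_apply]
      by_cases hij : i = j
      · subst hij
        rw [if_pos rfl, Finset.sum_eq_single i]
        · simp
        · intro k _ hk
          rw [if_neg (fun hc => hk hc.symm), zero_mul]
        · intro h; exact absurd (Finset.mem_univ i) h
      · rw [if_neg hij, Finset.sum_eq_zero]
        intro k _
        by_cases hik : i = k
        · have hjk : j ≠ k := fun hc => hij (hik.trans hc.symm)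
          rw [if_neg hjk, mul_zero]
        · rw [if_neg hik, zero_mul]
  -- membership
  have hZmem : Z ∈ Matrix.unitaryGroup (Fin n) ℂ := by
    rw [Matrix.mem_unitaryGroup_iff, Matrix.star_eq_conjTranspose]
    exact hZZH
  refine ⟨Z, hZmem, ?_⟩
  rw [Matrix.star_eq_conjTranspose]
  have hNform : N = ((2:ℂ))⁻¹ • (D + B) := by
    rw [hBform]
    ext i j
    simp only [Matrix.smul_apply, Matrix.add_apply, Matrix.sub_apply]
    rw [smul_eq_mul]
    push_cast
    ring
  have hZD : Z * D = D * Z := by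
    ext i j
    rw [hDdef, Matrix.mul_diagonal, Matrix.diagonal_mul]
    by_cases hi : d i < 0
    · rw [hZneg i hi j]
      by_cases hd : d j = d i
      · rw [hd]; ring
      · have hz : B (s i hi) j = 0 := hBsupp _ _ (by
          rw [hs i hi]
          intro hc
          exact hd (by linarith))
        rw [hz]
        ring
    · rw [hZpos i hi j]
      by_cases hij : i = j
      · subst hij; ring
      · rw [if_neg hij]; ring
  have hZDZ : Z * D * Zᴴ = D := by
    rw [hZD, Matrix.mul_assoc, hZZH, Matrix.mul_one]
  have hZB : ∀ i k, (Z * B) i k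
      = if h : d i < 0 then Complex.I * ((d i : ℝ) : ℂ) * (if s i h = k then 1 else 0)
        else B i k := by
    intro i k
    rw [Matrix.mul_apply]
    by_cases hi : d i < 0
    · rw [dif_pos hi]
      have e0 : ∀ l, Z i l * B l k
          = ((-(d i) : ℝ) : ℂ)⁻¹ * Complex.I * (B (s i hi) l * B l k) := by
        intro l; rw [hZneg i hi l]; ring
      rw [Finset.sum_congr rfl (fun l _ => e0 l), ← Finset.mul_sum, hBsq]
      by_cases hsk : s i hi = k
      · rw [if_pos hsk, if_pos hsk, hs i hi]
        have h0 : ((d i : ℝ) : ℂ) ≠ 0 := by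
          simp only [ne_eq, Complex.ofReal_eq_zero]; linarith
        push_cast
        field_simp
      · rw [if_neg hsk, if_neg hsk]
        simp
    · rw [dif_neg hi]
      have e0 : ∀ l, Z i l * B l k = (if i = l then 1 else 0) * B l k := by
        intro l; rw [hZpos i hi l]
      rw [Finset.sum_congr rfl (fun l _ => e0 l), Finset.sum_eq_single i]
      · rw [if_pos rfl, one_mul]
      · intro l _ hl
        rw [if_neg (fun hc => hl hc.symm), zero_mul]
      · intro h; exact absurd (Finset.mem_univ i) h
  have hFapp : ∀ i j, (Z * B * Zᴴ) i j
      = if hi : d i < 0 then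
          (if d j < 0 then 0
           else Complex.I * ((d i : ℝ) : ℂ) * (if s i hi = j then 1 else 0))
        else (if hj : d j < 0 then
          Complex.I * ((d j : ℝ) : ℂ) * (if s j hj = i then 1 else 0)
        else 0) := by
    intro i j
    rw [Matrix.mul_apply]
    by_cases hi : d i < 0 <;> by_cases hj : d j < 0
    · rw [dif_pos hi, if_pos hj]
      apply Finset.sum_eq_zero
      intro k _
      rw [hZB i k, dif_pos hi, Matrix.conjTranspose_apply, hZneg j hj k]
      by_cases hsk : s i hi = k
      · subst hsk
        have hz : B (s j hj) (s i hi) = 0 := hBsupp _ _ (by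
          rw [hs i hi, hs j hj]
          intro hc
          linarith)
        rw [hz]
        simp
      · rw [if_neg hsk]
        simp
    · rw [dif_pos hi, if_neg hj]
      have e0 : ∀ k, (Z * B) i k * Zᴴ k j
          = (Complex.I * ((d i : ℝ) : ℂ) * (if s i hi = k then 1 else 0))
            * (if j = k then 1 else 0) := by
        intro k
        rw [hZB i k, dif_pos hi, Matrix.conjTranspose_apply, hZpos j hj k]
        simp only [Complex.star_def, apply_ite (starRingEnd ℂ), _root_.map_one, _root_.map_zero]
      rw [Finset.sum_congr rfl (fun k _ => e0 k), Finset.sum_eq_single (s i hi)]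
      · rw [if_pos rfl, mul_one]
        by_cases hsj : s i hi = j
        · rw [if_pos hsj, if_pos hsj.symm, mul_one]
        · rw [if_neg hsj, if_neg (fun hc => hsj hc.symm), mul_zero]
      · intro k _ hk
        rw [if_neg (fun hc => hk hc.symm), mul_zero, zero_mul]
      · intro h; exact absurd (Finset.mem_univ (s i hi)) h
    · rw [dif_neg hi, dif_pos hj]
      have e0 : ∀ k, (Z * B) i k * Zᴴ k j
          = (((-(d j) : ℝ) : ℂ)⁻¹ * (-Complex.I))
            * (B i k * (starRingEnd ℂ) (B (s j hj) k)) := by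
        intro k
        rw [hZB i k, dif_neg hi, Matrix.conjTranspose_apply, hZneg j hj k]
        simp only [Complex.star_def, _root_.map_mul, map_inv₀, Complex.conj_ofReal,
          Complex.conj_I]
        ring
      rw [Finset.sum_congr rfl (fun k _ => e0 k), ← Finset.mul_sum, hBBHapp]
      by_cases hsj : s j hj = i
      · rw [if_pos hsj.symm, if_pos hsj, mul_one, ← hsj, hs j hj]
        have h0 : ((d j : ℝ) : ℂ) ≠ 0 := by
          simp only [ne_eq, Complex.ofReal_eq_zero]; linarith
        push_cast
        field_simp
      · rw [if_neg (fun hc => hsj hc.symm), if_neg hsj, mul_zero, mul_zero]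
    · rw [dif_neg hi, dif_neg hj]
      have e0 : ∀ k, (Z * B) i k * Zᴴ k j = B i k * (if j = k then 1 else 0) := by
        intro k
        rw [hZB i k, dif_neg hi, Matrix.conjTranspose_apply, hZpos j hj k]
        simp only [Complex.star_def, apply_ite (starRingEnd ℂ), _root_.map_one, _root_.map_zero]
      rw [Finset.sum_congr rfl (fun k _ => e0 k), Finset.sum_eq_single j]
      · rw [if_pos rfl, mul_one]
        by_cases hd : d i + d j ≠ 0
        · exact hBsupp i j hd
        · push_neg at hd
          push_neg at hi hj
          have hdi : d i = 0 := by linarith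
          exact hker i hdi j
      · intro k _ hk
        rw [if_neg (fun hc => hk hc.symm), mul_zero]
      · intro h; exact absurd (Finset.mem_univ j) h
  have hFsym : (Z * B * Zᴴ)ᵀ = Z * B * Zᴴ := by
    ext i j
    rw [Matrix.transpose_apply, hFapp j i, hFapp i j]
    by_cases hi : d i < 0 <;> by_cases hj : d j < 0
    · simp only [dif_pos hi, dif_pos hj, if_pos hi, if_pos hj]
    · simp only [dif_pos hi, dif_neg hj, if_neg hj]
    · simp only [dif_neg hi, dif_pos hj, if_neg hi]
    · simp only [dif_neg hi, dif_neg hj]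
  have hT : Z * N * Zᴴ = ((2:ℂ))⁻¹ • (D + Z * B * Zᴴ) := by
    rw [hNform, Matrix.mul_smul, Matrix.smul_mul, Matrix.mul_add, Matrix.add_mul, hZDZ]
  rw [hT, Matrix.transpose_smul, Matrix.transpose_add, hFsym, hDdef, Matrix.diagonal_transpose]

/-- Every complex square matrix `M` with `M² = 0` is unitarily similar to a symmetric
complex matrix. -/
theorem sq_zero_unitarily_similar_symmetric
    {n : ℕ} (M : Matrix (Fin n) (Fin n) ℂ) (hM : M * M = 0) :
    ∃ U ∈ Matrix.unitaryGroup (Fin n) ℂ,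
      (U * M * star U)ᵀ = U * M * star U := by
  set A : Matrix (Fin n) (Fin n) ℂ := M + Mᴴ with hAdef
  have hA : A.IsHermitian := by
    simp [Matrix.IsHermitian, hAdef, add_comm]
  set V : Matrix (Fin n) (Fin n) ℂ := (hA.eigenvectorUnitary : Matrix (Fin n) (Fin n) ℂ) with hVdef
  have hV : V ∈ Matrix.unitaryGroup (Fin n) ℂ := hA.eigenvectorUnitary.2
  have hVV : V * star V = 1 := (Matrix.mem_unitaryGroup_iff).mp hV
  set N : Matrix (Fin n) (Fin n) ℂ := star V * M * V with hNdef
  have hNN : N * N = 0 := by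
    calc N * N = star V * (M * (V * star V) * M) * V := by
          simp only [hNdef, Matrix.mul_assoc]
    _ = 0 := by rw [hVV, Matrix.mul_one, hM]; simp [Matrix.mul_assoc]
  have hND : N + Nᴴ = Matrix.diagonal (fun i => (hA.eigenvalues i : ℂ)) := by
    have h : star V * A * V = Matrix.diagonal (RCLike.ofReal ∘ hA.eigenvalues) := by
      have h0 := hA.conjStarAlgAut_star_eigenvectorUnitary
      rwa [Unitary.conjStarAlgAut_star_apply] at h0
    have h2 : N + Nᴴ = star V * A * V := by
      simp only [hNdef, hAdef, Matrix.conjTranspose_mul, Matrix.add_mul, Matrix.mul_add,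
        Matrix.star_eq_conjTranspose, Matrix.conjTranspose_conjTranspose, Matrix.mul_assoc]
    rw [h2, h]
    rfl
  obtain ⟨Z, hZ, hZsym⟩ := aux_sym N hA.eigenvalues hNN hND
  refine ⟨Z * star V, mul_mem hZ (Unitary.star_mem hV), ?_⟩
  have h3 : Z * star V * M * star (Z * star V) = Z * N * star Z := by
    rw [StarMul.star_mul, star_star, hNdef]
    simp only [Matrix.mul_assoc]
  rw [h3]
  exact hZsym
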